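/- Let X be a smooth curve over a field, 0 a point of X, Y a smooth surface (or more generally a smooth variety), and L a torsion-free coherent sheaf on Y × X equipped with an embedding into O_{Y×X} ⊗ E (E a finite-dimensional vector space) with X-flat cokernel. If the restriction of L to Y × (X − 0) is a line bundle, then L itself is a line bundle. -/

import Mathlib

/-!
STATEMENT 3.  Let `L` be a torsion-free sheaf on `Y × X` embedded in `O ⊗ E` with
`X`-flat cokernel, which is a line bundle over `Y × (X − 0)`.  Then `L` is a line
bundle.

Module-theoretic formalization: `R` is the (regular, hence Noetherian UFD)
coordinate ring of (an open piece of) the smooth variety `Y × X`, and `t ∈ R`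
is the prime element cutting out the fiber `Y × 0`.  The sheaf `L` is a nonzero
submodule of the free module `ι → R` (= `O ⊗ E`).  `X`-flatness of the cokernel
(injectivity of `κ` on the fiber over `0`) says that `L/tL → (R/t)^ι` is
injective, i.e. `t • x ∈ L → x ∈ L`.  That `L` is a line bundle away from the
fiber `t = 0` says that after inverting `t`, `L` is generated by a single
nonzero element `v`.  The conclusion is that `L` itself is free of rank 1.
-/
theorem line_bundle_off_special_fiber_extends
    (R : Type*) [CommRing R] [IsDomain R] [IsNoetherianRing R]
    [UniqueFactorizationMonoid R]
    (t : R) (ht : Prime t)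
    (ι : Type*) [Fintype ι]
    (L : Submodule R (ι → R))
    (hfiber : ∀ x : ι → R, t • x ∈ L → x ∈ L)
    (hgen : ∃ v ∈ L, v ≠ 0 ∧ ∀ x ∈ L, ∃ (k : ℕ) (a : R), t ^ k • x = a • v) :
    ∃ w : ι → R, w ≠ 0 ∧ L = Submodule.span R {w} := by
  obtain ⟨v, hvL, hv0, hvgen⟩ := hgen
  -- saturation under powers of t
  have hsat : ∀ (m : ℕ) (x : ι → R), t ^ m • x ∈ L → x ∈ L := by
    intro m
    induction m with
    | zero => intro x hx; simpa using hx
    | succ n ih =>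
      intro x hx
      apply hfiber
      apply ih
      rwa [pow_succ, mul_smul] at hx
  -- pick a nonzero coordinate of v
  obtain ⟨i1, hi1⟩ : ∃ i, v i ≠ 0 := Function.ne_iff.mp hv0
  -- the set of n such that not all coordinates divisible by t^(n+1) is nonempty
  have hfin : FiniteMultiplicity t (v i1) := FiniteMultiplicity.of_prime_left ht hi1
  obtain ⟨N, hN⟩ := hfin
  have hex : ∃ n : ℕ, ¬ (∀ i, t ^ (n + 1) ∣ v i) := ⟨N, fun h => hN (h i1)⟩
  classical
  set m := Nat.find hex with hmdef
  have hm1 : ¬ (∀ i, t ^ (m + 1) ∣ v i) := Nat.find_spec hex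
  have hmall : ∀ i, t ^ m ∣ v i := by
    intro i
    rcases Nat.eq_zero_or_pos m with h0 | hpos
    · rw [h0]; simp
    · have hlt : m - 1 < m := by omega
      have := Nat.find_min hex (hmdef ▸ hlt)
      have h2 : ∀ j, t ^ (m - 1 + 1) ∣ v j := not_not.mp this
      have := h2 i
      rwa [Nat.sub_add_cancel hpos] at this
  -- define w
  choose w hw using fun i => hmall i
  have hvw : v = t ^ m • w := by
    funext i
    simpa using hw i
  obtain ⟨i0, hi0⟩ : ∃ i, ¬ t ^ (m + 1) ∣ v i := by
    push_neg at hm1; exact hm1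
  have hti0 : ¬ t ∣ w i0 := by
    intro ⟨c, hc⟩
    apply hi0
    refine ⟨c, ?_⟩
    rw [hvw]
    simp only [Pi.smul_apply, smul_eq_mul, hc]
    ring
  have hwL : w ∈ L := hsat m w (hvw ▸ hvL)
  have hw0 : w ≠ 0 := by
    intro h
    exact hti0 (h ▸ (dvd_zero t : t ∣ (0 : ι → R) i0))
  refine ⟨w, hw0, le_antisymm ?_ ?_⟩
  · intro x hx
    obtain ⟨k, a, hka⟩ := hvgen x hx
    rw [hvw, smul_smul] at hka
    -- t^k ∣ a * t^m
    have hdvd : t ^ k ∣ a * t ^ m := by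
      have h1 : t ^ k ∣ (a * t ^ m) * w i0 := by
        refine ⟨x i0, ?_⟩
        have := congrFun hka i0
        simpa [mul_comm] using this.symm
      exact ht.pow_dvd_of_dvd_mul_right k hti0 h1
    obtain ⟨c, hc⟩ := hdvd
    have hx' : t ^ k • x = t ^ k • (c • w) := by
      rw [hka, hc, mul_smul]
    have hxc : x = c • w := by
      funext i
      have := congrFun hx' i
      simp only [Pi.smul_apply, smul_eq_mul] at this
      exact mul_left_cancel₀ (pow_ne_zero k ht.ne_zero) this
    rw [hxc]
    exact Submodule.smul_mem _ _ (Submodule.mem_span_singleton_self w)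
  · rw [Submodule.span_le, Set.singleton_subset_iff]
    exact hwL
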